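/- arXiv:1807.00159 — 4 statements merged into one kernel-verified Lean document; each statement's English description precedes it below -/
import Mathlib

section
/- Let G be the group with presentation ⟨s₁,s₂,s₃,s₄,h | [sₖ,h] for 1≤k≤4, s₁²h, s₂²h, s₃²h, s₄²h, s₁s₂s₃s₄h²⟩, and let φ : G → ℤ/2 be the homomorphism with φ(s₁)=φ(s₂)=1, φ(s₃)=φ(s₄)=0, φ(h)=0. Then φ does not factor through ℤ: there is no homomorphism ψ : G → ℤ with φ = (mod 2) ∘ ψ. -/
open FreeGroup

/-- Relators of π₁(M₂), generators s₁=0, s₂=1, s₃=2, s₄=3, h=4. -/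
def relsM2 : Set (FreeGroup (Fin 5)) :=
  { of 0 * of 4 * (of 0)⁻¹ * (of 4)⁻¹,
    of 1 * of 4 * (of 1)⁻¹ * (of 4)⁻¹,
    of 2 * of 4 * (of 2)⁻¹ * (of 4)⁻¹,
    of 3 * of 4 * (of 3)⁻¹ * (of 4)⁻¹,
    of 0 ^ 2 * of 4, of 1 ^ 2 * of 4, of 2 ^ 2 * of 4, of 3 ^ 2 * of 4,
    of 0 * of 1 * of 2 * of 3 * of 4 ^ 2 }

/-- Reduction mod 2, multiplicatively. -/
def mod2 : Multiplicative ℤ →* Multiplicative (ZMod 2) :=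
  AddMonoidHom.toMultiplicative (Int.castAddHom (ZMod 2))

lemma relsM2_eq_one {r : FreeGroup (Fin 5)} (hr : r ∈ relsM2) :
    (QuotientGroup.mk r : PresentedGroup relsM2) = 1 :=
  (QuotientGroup.eq_one_iff r).mpr (Subgroup.subset_normalClosure hr)

/-- The epimorphism φ₁ of π₁(M₂) with φ(s₁)=φ(s₂)=1, φ(s₃)=φ(s₄)=φ(h)=0
does not factor through ℤ. -/
theorem stmt3 (φ : PresentedGroup relsM2 →* Multiplicative (ZMod 2))
    (h1 : φ (PresentedGroup.of 0) = Multiplicative.ofAdd (1 : ZMod 2))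
    (h2 : φ (PresentedGroup.of 1) = Multiplicative.ofAdd (1 : ZMod 2))
    (h3 : φ (PresentedGroup.of 2) = Multiplicative.ofAdd (0 : ZMod 2))
    (h4 : φ (PresentedGroup.of 3) = Multiplicative.ofAdd (0 : ZMod 2))
    (h5 : φ (PresentedGroup.of 4) = Multiplicative.ofAdd (0 : ZMod 2)) :
    ¬ ∃ ψ : PresentedGroup relsM2 →* Multiplicative ℤ, φ = mod2.comp ψ := by
  rintro ⟨ψ, hψ⟩
  have r1 : (PresentedGroup.of 0 : PresentedGroup relsM2) ^ 2 * PresentedGroup.of 4 = 1 := by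
    have := relsM2_eq_one (r := of 0 ^ 2 * of 4) (by simp [relsM2])
    exact this
  have r3 : (PresentedGroup.of 2 : PresentedGroup relsM2) ^ 2 * PresentedGroup.of 4 = 1 := by
    have := relsM2_eq_one (r := of 2 ^ 2 * of 4) (by simp [relsM2])
    exact this
  -- images under ψ, additively
  set a := Multiplicative.toAdd (ψ (PresentedGroup.of 0)) with ha
  set c := Multiplicative.toAdd (ψ (PresentedGroup.of 2)) with hc
  set b := Multiplicative.toAdd (ψ (PresentedGroup.of 4)) with hb
  have e1 : a + a + b = 0 := by
    have := congrArg Multiplicative.toAdd (congrArg ψ r1)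
    simp only [_root_.map_mul, _root_.map_pow, _root_.map_one, toAdd_mul, toAdd_pow, toAdd_one, smul_eq_mul, two_nsmul, two_smul] at this
    omega
  have e3 : c + c + b = 0 := by
    have := congrArg Multiplicative.toAdd (congrArg ψ r3)
    simp only [_root_.map_mul, _root_.map_pow, _root_.map_one, toAdd_mul, toAdd_pow, toAdd_one, smul_eq_mul, two_nsmul, two_smul] at this
    omega
  have hac : a = c := by omega
  have f1 : φ (PresentedGroup.of 0) = mod2 (ψ (PresentedGroup.of 0)) := by rw [hψ]; rfl
  have f3 : φ (PresentedGroup.of 2) = mod2 (ψ (PresentedGroup.of 2)) := by rw [hψ]; rfl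
  have : ψ (PresentedGroup.of 0) = ψ (PresentedGroup.of 2) := by
    have := congrArg Multiplicative.ofAdd (hac)
    simpa [ha, hc] using this
  rw [f1] at h1
  rw [f3] at h3
  rw [this, h3] at h1
  exact absurd h1 (by decide)
end

section
/- Let G be the group with presentation ⟨s₁,s₂,s₃,h | [sₖ,h] for 1≤k≤3, s₁³h, s₂³h, s₃³h, s₁s₂s₃h⟩. Then there is exactly one surjective homomorphism φ : G → ℤ/2; it satisfies φ(s₁)=φ(s₂)=φ(s₃)=φ(h)=1, and it factors through ℤ via the homomorphism ψ with ψ(sₖ)=1 and ψ(h)=-3. -/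
open FreeGroup

def relsM3 : Set (FreeGroup (Fin 4)) :=
  { of 0 * of 3 * (of 0)⁻¹ * (of 3)⁻¹,
    of 1 * of 3 * (of 1)⁻¹ * (of 3)⁻¹,
    of 2 * of 3 * (of 2)⁻¹ * (of 3)⁻¹,
    of 0 ^ 3 * of 3, of 1 ^ 3 * of 3, of 2 ^ 3 * of 3,
    of 0 * of 1 * of 2 * of 3 }

def fpsi : Fin 4 → Multiplicative ℤ :=
  ![Multiplicative.ofAdd 1, Multiplicative.ofAdd 1, Multiplicative.ofAdd 1,
    Multiplicative.ofAdd (-3)]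

lemma fpsi_rels : ∀ r ∈ relsM3, FreeGroup.lift fpsi r = 1 := by
  intro r hr
  simp only [relsM3, Set.mem_insert_iff, Set.mem_singleton_iff] at hr
  rcases hr with h|h|h|h|h|h|h <;> subst h <;>
    simp [fpsi, ← ofAdd_add, ← ofAdd_neg] <;> decide

def psi0 : PresentedGroup relsM3 →* Multiplicative ℤ := PresentedGroup.toGroup fpsi_rels

lemma mk_rel {r : FreeGroup (Fin 4)} (hr : r ∈ relsM3) :
    PresentedGroup.mk relsM3 r = 1 :=
  (QuotientGroup.eq_one_iff r).mpr (Subgroup.subset_normalClosure hr)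

lemma zmod2_key : ∀ a b : ZMod 2, 3 * a + b = 0 → a = b := by decide

lemma gens_eq (φ : PresentedGroup relsM3 →* Multiplicative (ZMod 2)) (i : Fin 4) :
    φ (PresentedGroup.of i) = φ (PresentedGroup.of 3) := by
  fin_cases i
  · have h := congrArg φ (mk_rel (show of 0 ^ 3 * of 3 ∈ relsM3 by simp [relsM3]))
    simp only [_root_.map_mul, map_pow, _root_.map_one] at h
    have h' := congrArg Multiplicative.toAdd h
    simp at h'
    exact Multiplicative.toAdd.injective (zmod2_key _ _ h')
  · have h := congrArg φ (mk_rel (show of 1 ^ 3 * of 3 ∈ relsM3 by simp [relsM3]))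
    simp only [_root_.map_mul, map_pow, _root_.map_one] at h
    have h' := congrArg Multiplicative.toAdd h
    simp at h'
    exact Multiplicative.toAdd.injective (zmod2_key _ _ h')
  · have h := congrArg φ (mk_rel (show of 2 ^ 3 * of 3 ∈ relsM3 by simp [relsM3]))
    simp only [_root_.map_mul, map_pow, _root_.map_one] at h
    have h' := congrArg Multiplicative.toAdd h
    simp at h'
    exact Multiplicative.toAdd.injective (zmod2_key _ _ h')
  · rfl

lemma surj_gens (φ : PresentedGroup relsM3 →* Multiplicative (ZMod 2))
    (hφ : Function.Surjective φ) (i : Fin 4) :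
    φ (PresentedGroup.of i) = Multiplicative.ofAdd (1 : ZMod 2) := by
  rw [gens_eq]
  by_contra hne
  have h3 : φ (PresentedGroup.of 3) = 1 := by
    have : (φ (PresentedGroup.of 3)).toAdd = 0 ∨ (φ (PresentedGroup.of 3)).toAdd = 1 := by
      generalize (φ (PresentedGroup.of 3)).toAdd = a; revert a; decide
    rcases this with h|h
    · exact Multiplicative.toAdd.injective h
    · exact absurd (Multiplicative.toAdd.injective h) hne
  have htriv : φ = 1 := by
    ext i
    rw [gens_eq, h3]; rfl
  obtain ⟨g, hg⟩ := hφ (Multiplicative.ofAdd (1 : ZMod 2))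
  rw [htriv] at hg
  simp only [MonoidHom.one_apply] at hg
  exact absurd hg (by decide)

lemma phi0_eq (φ : PresentedGroup relsM3 →* Multiplicative (ZMod 2))
    (hφ : Function.Surjective φ) : φ = mod2.comp psi0 := by
  ext i
  rw [surj_gens φ hφ i]
  have : psi0 (PresentedGroup.of i) = fpsi i := PresentedGroup.toGroup.of fpsi_rels
  simp only [MonoidHom.comp_apply, this]
  fin_cases i <;> decide

/-- There is exactly one epimorphism π₁(M₃) → ℤ/2; it sends all generators to 1
and factors through ℤ via ψ(sₖ)=1, ψ(h)=-3. -/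
theorem stmt5 :
    Nat.card {φ : PresentedGroup relsM3 →* Multiplicative (ZMod 2) //
        Function.Surjective φ} = 1 ∧
    ∀ φ : PresentedGroup relsM3 →* Multiplicative (ZMod 2), Function.Surjective φ →
      (∀ i : Fin 4, φ (PresentedGroup.of i) = Multiplicative.ofAdd (1 : ZMod 2)) ∧
      ∃ ψ : PresentedGroup relsM3 →* Multiplicative ℤ,
        (∀ k : Fin 3, ψ (PresentedGroup.of k.castSucc) = Multiplicative.ofAdd (1 : ℤ)) ∧
        ψ (PresentedGroup.of 3) = Multiplicative.ofAdd (-3 : ℤ) ∧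
        φ = mod2.comp ψ := by
  have hsurj : Function.Surjective (mod2.comp psi0) := by
    intro x
    rcases (show x = 1 ∨ x = Multiplicative.ofAdd (1 : ZMod 2) by revert x; decide) with h|h
    · exact ⟨1, by simp [h]⟩
    · refine ⟨PresentedGroup.of 0, ?_⟩
      have : psi0 (PresentedGroup.of (0 : Fin 4)) = fpsi 0 := PresentedGroup.toGroup.of fpsi_rels
      simp only [MonoidHom.comp_apply, this, h]
      decide
  constructor
  · rw [Nat.card_eq_one_iff_unique]
    refine ⟨⟨fun a b => Subtype.ext ?_⟩, ⟨⟨_, hsurj⟩⟩⟩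
    rw [phi0_eq a.1 a.2, phi0_eq b.1 b.2]
  · intro φ hφ
    refine ⟨surj_gens φ hφ, psi0, ?_, ?_, phi0_eq φ hφ⟩
    · intro k
      have : psi0 (PresentedGroup.of k.castSucc) = fpsi k.castSucc :=
        PresentedGroup.toGroup.of fpsi_rels
      rw [this]; fin_cases k <;> rfl
    · exact PresentedGroup.toGroup.of fpsi_rels
end

section
/- Let G be the group with presentation ⟨v₁,v₂,h | v₁hv₁⁻¹h⁻¹, v₂hv₂⁻¹h⁻¹, v₁²v₂²⟩. The map v₁ ↦ hv₁, v₂ ↦ h⁻¹v₂, h ↦ h extends to an automorphism θ of G, and φ₁ ∘ θ = φ₄, where φ₁, φ₄ : G → ℤ/2 are the epimorphisms with (φ₁(v₁),φ₁(v₂),φ₁(h))=(1,1,1) and (φ₄(v₁),φ₄(v₂),φ₄(h))=(0,0,1). -/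
open FreeGroup

/-- Relators of π₁(N₁) = ⟨v₁,v₂,h | v₁hv₁⁻¹h⁻¹, v₂hv₂⁻¹h⁻¹, v₁²v₂²⟩,
generators v₁=0, v₂=1, h=2. -/
def relsN1 : Set (FreeGroup (Fin 3)) :=
  { of 0 * of 2 * (of 0)⁻¹ * (of 2)⁻¹,
    of 1 * of 2 * (of 1)⁻¹ * (of 2)⁻¹,
    of 0 ^ 2 * of 1 ^ 2 }

namespace Stmt13Aux

lemma rel_one {r : FreeGroup (Fin 3)} (hr : r ∈ relsN1) :
    PresentedGroup.mk relsN1 r = 1 :=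
  (QuotientGroup.eq_one_iff r).2 (Subgroup.subset_normalClosure hr)

lemma comm02 : Commute (PresentedGroup.of (rels := relsN1) 2) (PresentedGroup.of 0) := by
  have h := rel_one (r := of 0 * of 2 * (of 0)⁻¹ * (of 2)⁻¹) (by left; rfl)
  simp only [_root_.map_mul, _root_.map_inv] at h
  change PresentedGroup.of 0 * PresentedGroup.of 2 * (PresentedGroup.of 0)⁻¹ *
    (PresentedGroup.of 2)⁻¹ = 1 at h
  symm
  rw [Commute, SemiconjBy, ← mul_inv_eq_one]
  group at h ⊢
  exact h

lemma comm12 : Commute (PresentedGroup.of (rels := relsN1) 2) (PresentedGroup.of 1) := by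
  have h := rel_one (r := of 1 * of 2 * (of 1)⁻¹ * (of 2)⁻¹) (by right; left; rfl)
  simp only [_root_.map_mul, _root_.map_inv] at h
  change PresentedGroup.of 1 * PresentedGroup.of 2 * (PresentedGroup.of 1)⁻¹ *
    (PresentedGroup.of 2)⁻¹ = 1 at h
  symm
  rw [Commute, SemiconjBy, ← mul_inv_eq_one]
  group at h ⊢
  exact h

lemma sq_rel :
    (PresentedGroup.of (rels := relsN1) 0) ^ 2 * (PresentedGroup.of 1) ^ 2 = 1 := by
  have h := rel_one (r := of 0 ^ 2 * of 1 ^ 2) (by right; right; rfl)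
  simp only [_root_.map_mul, _root_.map_pow] at h
  exact h

noncomputable abbrev t : PresentedGroup relsN1 := PresentedGroup.of 2
noncomputable abbrev v : PresentedGroup relsN1 := PresentedGroup.of 0
noncomputable abbrev w : PresentedGroup relsN1 := PresentedGroup.of 1

/-- forward images -/
noncomputable def fθ : Fin 3 → PresentedGroup relsN1
  | 0 => t * v
  | 1 => t⁻¹ * w
  | 2 => t

/-- backward images -/
noncomputable def fθ' : Fin 3 → PresentedGroup relsN1
  | 0 => t⁻¹ * v
  | 1 => t * w
  | 2 => t

open scoped commutatorElement in
lemma key {f : Fin 3 → PresentedGroup relsN1} (ε : ℤ)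
    (hv : FreeGroup.lift f (of 0) = t ^ ε * v)
    (hw : FreeGroup.lift f (of 1) = t ^ (-ε) * w)
    (ht : FreeGroup.lift f (of 2) = t) :
    ∀ r ∈ relsN1, FreeGroup.lift f r = 1 := by
  have ctv : Commute t (t ^ ε * v) := (Commute.zpow_right (Commute.refl t) _).mul_right comm02
  have ctw : Commute t (t ^ (-ε) * w) :=
    (Commute.zpow_right (Commute.refl t) _).mul_right comm12
  rintro r (rfl | rfl | rfl)
  · simp only [_root_.map_mul, _root_.map_inv, hv, ht]
    rw [show ∀ a b : PresentedGroup relsN1, a * b * a⁻¹ * b⁻¹ = ⁅a, b⁆ from fun _ _ => rfl,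
      commutatorElement_eq_one_iff_commute]
    exact ctv.symm
  · simp only [_root_.map_mul, _root_.map_inv, hw, ht]
    rw [show ∀ a b : PresentedGroup relsN1, a * b * a⁻¹ * b⁻¹ = ⁅a, b⁆ from fun _ _ => rfl,
      commutatorElement_eq_one_iff_commute]
    exact ctw.symm
  · simp only [_root_.map_mul, _root_.map_pow, hv, hw]
    have c1 : Commute (t ^ ε) v := comm02.zpow_left ε
    have c2 : Commute (t ^ (-ε)) w := comm12.zpow_left (-ε)
    rw [c1.mul_pow, c2.mul_pow]
    have hsw : v ^ 2 * (t ^ (-ε)) ^ 2 = (t ^ (-ε)) ^ 2 * v ^ 2 :=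
      ((comm02.zpow_left (-ε)).symm.pow_pow 2 2).eq
    calc (t ^ ε) ^ 2 * v ^ 2 * ((t ^ (-ε)) ^ 2 * w ^ 2)
        = (t ^ ε) ^ 2 * (v ^ 2 * (t ^ (-ε)) ^ 2) * w ^ 2 := by group
      _ = (t ^ ε) ^ 2 * ((t ^ (-ε)) ^ 2 * v ^ 2) * w ^ 2 := by rw [hsw]
      _ = v ^ 2 * w ^ 2 := by group
      _ = 1 := sq_rel

lemma checkθ : ∀ r ∈ relsN1, FreeGroup.lift fθ r = 1 := by
  apply key 1 <;> simp only [FreeGroup.lift_apply_of, zpow_one, zpow_neg] <;> rfl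

lemma checkθ' : ∀ r ∈ relsN1, FreeGroup.lift fθ' r = 1 := by
  apply key (-1) <;>
    simp only [FreeGroup.lift_apply_of, zpow_one, zpow_neg, neg_neg, inv_inv] <;> rfl

noncomputable def θhom : PresentedGroup relsN1 →* PresentedGroup relsN1 :=
  PresentedGroup.toGroup checkθ

noncomputable def θ'hom : PresentedGroup relsN1 →* PresentedGroup relsN1 :=
  PresentedGroup.toGroup checkθ'

lemma θ0 : θhom (PresentedGroup.of 0) = t * v := PresentedGroup.toGroup.of checkθ
lemma θ1 : θhom (PresentedGroup.of 1) = t⁻¹ * w := PresentedGroup.toGroup.of checkθ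
lemma θ2 : θhom (PresentedGroup.of 2) = t := PresentedGroup.toGroup.of checkθ
lemma θ'0 : θ'hom (PresentedGroup.of 0) = t⁻¹ * v := PresentedGroup.toGroup.of checkθ'
lemma θ'1 : θ'hom (PresentedGroup.of 1) = t * w := PresentedGroup.toGroup.of checkθ'
lemma θ'2 : θ'hom (PresentedGroup.of 2) = t := PresentedGroup.toGroup.of checkθ'

lemma left : θ'hom.comp θhom = MonoidHom.id _ := by
  apply PresentedGroup.ext
  intro x
  fin_cases x
  · show θ'hom (θhom (PresentedGroup.of 0)) = PresentedGroup.of 0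
    rw [θ0, _root_.map_mul, θ'2, θ'0]; group
  · show θ'hom (θhom (PresentedGroup.of 1)) = PresentedGroup.of 1
    rw [θ1, _root_.map_mul, _root_.map_inv, θ'2, θ'1]; group
  · show θ'hom (θhom (PresentedGroup.of 2)) = PresentedGroup.of 2
    rw [θ2, θ'2]

lemma right : θhom.comp θ'hom = MonoidHom.id _ := by
  apply PresentedGroup.ext
  intro x
  fin_cases x
  · show θhom (θ'hom (PresentedGroup.of 0)) = PresentedGroup.of 0
    rw [θ'0, _root_.map_mul, _root_.map_inv, θ2, θ0]; group
  · show θhom (θ'hom (PresentedGroup.of 1)) = PresentedGroup.of 1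
    rw [θ'1, _root_.map_mul, θ2, θ1]; group
  · show θhom (θ'hom (PresentedGroup.of 2)) = PresentedGroup.of 2
    rw [θ'2, θ2]

noncomputable def θequiv : PresentedGroup relsN1 ≃* PresentedGroup relsN1 :=
  MonoidHom.toMulEquiv θhom θ'hom left right

end Stmt13Aux

open Stmt13Aux in
/-- The map v₁ ↦ hv₁, v₂ ↦ h⁻¹v₂, h ↦ h extends to an automorphism θ of π₁(N₁),
and φ₁ ∘ θ = φ₄ for the epimorphisms with values (1,1,1) resp. (0,0,1) on (v₁,v₂,h). -/
theorem stmt13 :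
    ∃ θ : PresentedGroup relsN1 ≃* PresentedGroup relsN1,
      θ (PresentedGroup.of 0) = PresentedGroup.of 2 * PresentedGroup.of 0 ∧
      θ (PresentedGroup.of 1) = (PresentedGroup.of 2)⁻¹ * PresentedGroup.of 1 ∧
      θ (PresentedGroup.of 2) = PresentedGroup.of 2 ∧
      ∀ φ₁ φ₄ : PresentedGroup relsN1 →* Multiplicative (ZMod 2),
        φ₁ (PresentedGroup.of 0) = Multiplicative.ofAdd (1 : ZMod 2) →
        φ₁ (PresentedGroup.of 1) = Multiplicative.ofAdd (1 : ZMod 2) →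
        φ₁ (PresentedGroup.of 2) = Multiplicative.ofAdd (1 : ZMod 2) →
        φ₄ (PresentedGroup.of 0) = Multiplicative.ofAdd (0 : ZMod 2) →
        φ₄ (PresentedGroup.of 1) = Multiplicative.ofAdd (0 : ZMod 2) →
        φ₄ (PresentedGroup.of 2) = Multiplicative.ofAdd (1 : ZMod 2) →
        φ₁.comp θ.toMonoidHom = φ₄ := by
  have h0 : θequiv (PresentedGroup.of 0) = PresentedGroup.of 2 * PresentedGroup.of 0 := θ0
  have h1 : θequiv (PresentedGroup.of 1) = (PresentedGroup.of 2)⁻¹ * PresentedGroup.of 1 := θ1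
  have h2 : θequiv (PresentedGroup.of 2) = PresentedGroup.of 2 := θ2
  refine ⟨θequiv, h0, h1, h2, ?_⟩
  intro φ₁ φ₄ a0 a1 a2 b0 b1 b2
  apply PresentedGroup.ext
  intro x
  fin_cases x
  · show φ₁ (θequiv (PresentedGroup.of 0)) = φ₄ (PresentedGroup.of 0)
    rw [h0, _root_.map_mul, a0, a2, b0]; decide
  · show φ₁ (θequiv (PresentedGroup.of 1)) = φ₄ (PresentedGroup.of 1)
    rw [h1, _root_.map_mul, _root_.map_inv, a1, a2, b1]; decide
  · show φ₁ (θequiv (PresentedGroup.of 2)) = φ₄ (PresentedGroup.of 2)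
    rw [h2, a2, b2]
end

section
/- Let G be the group with presentation ⟨v₁,v₂,h | v₁hv₁⁻¹h⁻¹, v₂hv₂⁻¹h⁻¹, v₁²v₂²⟩, and let φ₆ : G → ℤ/2 be the epimorphism with φ₆(v₁)=1, φ₆(v₂)=0, φ₆(h)=0. Then there is no homomorphism ψ : G → ℤ with φ₆ = (mod 2) ∘ ψ. -/
open FreeGroup

lemma relN1_sq : (PresentedGroup.of (rels := relsN1) 0) ^ 2 *
    (PresentedGroup.of (rels := relsN1) 1) ^ 2 = 1 := by
  have h : (of 0 ^ 2 * of 1 ^ 2 : FreeGroup (Fin 3)) ∈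
      Subgroup.normalClosure relsN1 :=
    Subgroup.subset_normalClosure (by right; right; rfl)
  have h1 : ((QuotientGroup.mk (of 0 ^ 2 * of 1 ^ 2 : FreeGroup (Fin 3)) :
      PresentedGroup relsN1)) = 1 :=
    (QuotientGroup.eq_one_iff _).mpr h
  exact h1

/-- The epimorphism φ₆ of π₁(N₁) with values (1,0,0) on (v₁,v₂,h) does not
factor through ℤ. -/
theorem stmt15 (φ₆ : PresentedGroup relsN1 →* Multiplicative (ZMod 2))
    (h1 : φ₆ (PresentedGroup.of 0) = Multiplicative.ofAdd (1 : ZMod 2))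
    (h2 : φ₆ (PresentedGroup.of 1) = Multiplicative.ofAdd (0 : ZMod 2))
    (h3 : φ₆ (PresentedGroup.of 2) = Multiplicative.ofAdd (0 : ZMod 2)) :
    ¬ ∃ ψ : PresentedGroup relsN1 →* Multiplicative ℤ, φ₆ = mod2.comp ψ := by
  rintro ⟨ψ, rfl⟩
  set a : ℤ := Multiplicative.toAdd (ψ (PresentedGroup.of 0)) with ha
  set b : ℤ := Multiplicative.toAdd (ψ (PresentedGroup.of 1)) with hb
  have hrel : 2 * a + 2 * b = 0 := by
    have := congrArg Multiplicative.toAdd (congrArg ψ relN1_sq)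
    simpa [ha, hb, two_mul, add_assoc, add_comm, add_left_comm] using this
  have h1' : (a : ZMod 2) = 1 := by
    have := h1
    simp only [MonoidHom.comp_apply, mod2, AddMonoidHom.toMultiplicative] at this
    exact_mod_cast congrArg Multiplicative.toAdd this
  have h2' : (b : ZMod 2) = 0 := by
    have := h2
    simp only [MonoidHom.comp_apply, mod2, AddMonoidHom.toMultiplicative] at this
    exact_mod_cast congrArg Multiplicative.toAdd this
  have hba : b = -a := by linarith
  rw [hba] at h2'
  push_cast at h2'
  rw [h1'] at h2'
  simp at h2'
end
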